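/- Let (W, ω) be a finite-dimensional symplectic graded vector space of even degree N. Under the identification Φ_ω : Der(T̂W) ≅ ∏_{r≥1} W^{⊗r}[-N] (via D ↦ the tensor corresponding to D|_W using ω to identify W* ≅ W[-N]), the subspace of symplectic derivations Der_ω(T̂W) corresponds exactly to ∏_{r≥1} (W^{⊗r})^{ℤ/rℤ}[-N], the product of the spaces of cyclically invariant tensors. -/
import Mathlib


/- Concrete model of the completed tensor algebra on a graded vector space `W`
with homogeneous basis indexed by `ι` (degrees `d : ι → ℤ`): the degree-`r` part
of `T̂W` is the space of functions `(words of length r in ι) → ℚ`.  A symplectic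
derivation `D` is determined by `t : ι → (List ι → ℚ)`, `t a = D(x^a)`, and
`B i j = ω_{ij}` is the inverse matrix of the symplectic form, so that the
symplectic element is `ω = Σ_{i,j} B i j · x^i x^j`. -/

/-- The tensor `Φ_ω(D)` corresponding to the derivation `D = Σ_a (t a) ∂/∂x^a`:
`Φ_ω(D) = Σ_{a,j} ω_{aj} (t a) ⊗ x^j`, in coordinates on a word `w`. -/
noncomputable def PhiTensor {ι : Type} [Fintype ι] [Inhabited ι]
    (B : ι → ι → ℚ) (t : ι → List ι → ℚ) : List ι → ℚ :=
  fun w => ∑ a : ι, B a (w.getLastD default) * t a w.dropLast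

/-- The condition `D(ω) = 0` (with `ω = Σ_{i,j} B i j x^i x^j`), written out via
the graded Leibniz rule for a derivation of homological degree `dD`. -/
def SympCond {ι : Type} [Fintype ι] [Inhabited ι]
    (d : ι → ℤ) (dD : ℤ) (B : ι → ι → ℚ) (t : ι → List ι → ℚ) : Prop :=
  ∀ w : List ι, w ≠ [] →
    (∑ a : ι, B a (w.getLastD default) * t a w.dropLast)
      + (-1 : ℚ) ^ (dD * d (w.headD default))
          * (∑ b : ι, B (w.headD default) b * t b w.tail) = 0

/-- Cyclic invariance (with Koszul signs) of the tensor `Φ_ω(D)`. -/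
def CycCond {ι : Type} [Fintype ι] [Inhabited ι]
    (d : ι → ℤ) (B : ι → ι → ℚ) (t : ι → List ι → ℚ) : Prop :=
  ∀ w : List ι, w ≠ [] →
    PhiTensor B t (w.rotate 1)
      = (-1 : ℚ) ^ (d (w.headD default) * ((w.tail.map d).sum)) * PhiTensor B t w

/-- for a finite-dimensional symplectic graded vector space of even
degree `N`, under the identification `Φ_ω`, a derivation is symplectic (it kills
the symplectic element `ω`) exactly when the corresponding tensor is cyclically
invariant (with Koszul signs). -/
theorem stmt_4 {ι : Type} [Fintype ι] [Inhabited ι]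
    (N dD : ℤ) (hN : Even N) (d : ι → ℤ) (B : ι → ι → ℚ)
    (hBanti : ∀ i j, B i j = -(-1 : ℚ) ^ (d i * d j) * B j i)
    (hBnd : ∀ i, ∃ j, B i j ≠ 0)
    (hBdeg : ∀ i j, B i j ≠ 0 → d i + d j = N)
    (t : ι → List ι → ℚ)
    (ht : ∀ a w, t a w ≠ 0 → (w.map d).sum = d a + dD) :
    SympCond d dD B t ↔ CycCond d B t := by
  have hne : (-1:ℚ) ≠ 0 := by norm_num
  have main : ∀ (h : ι) (tl : List ι),
      ((∑ a : ι, B a ((h::tl).getLastD default) * t a (h::tl).dropLast)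
        + (-1:ℚ) ^ (dD * d h) * (∑ b : ι, B h b * t b tl) = 0)
      ↔ (PhiTensor B t ((h::tl).rotate 1)
          = (-1:ℚ) ^ (d h * ((tl.map d).sum)) * PhiTensor B t (h::tl)) := by
    intro h tl
    set S : ℤ := (tl.map d).sum with hS
    set A : ℚ := ∑ a : ι, B a ((h::tl).getLastD default) * t a (h::tl).dropLast with hA
    set R : ℚ := ∑ b : ι, B b h * t b tl with hR
    set s : ℚ := (-1:ℚ) ^ (d h * S) with hs
    have hss : s * s = 1 := by
      rw [hs, ← zpow_add₀ hne]
      exact Even.neg_one_zpow ⟨d h * S, rfl⟩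
    have hPhiw : PhiTensor B t (h::tl) = A := rfl
    have hrot : (h::tl).rotate 1 = tl ++ [h] := by simp [List.rotate_cons_succ]
    have hPhiRot : PhiTensor B t ((h::tl).rotate 1) = R := by
      rw [hrot]; unfold PhiTensor; simp [hR]
    have hKEY : (∑ b : ι, B h b * t b tl)
        = (-(-1:ℚ) ^ (d h * S - d h * dD)) * R := by
      rw [hR, Finset.mul_sum]
      apply Finset.sum_congr rfl
      intro b _
      by_cases hb : t b tl = 0
      · simp [hb]
      · have h1 := ht b tl hb
        have h2 : d h * S - d h * dD = d h * d b := by rw [hS, h1]; ring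
        rw [hBanti h b, h2]; ring
    have hsign : (-1:ℚ) ^ (dD * d h) * (-(-1:ℚ) ^ (d h * S - d h * dD)) = -s := by
      rw [mul_neg, ← zpow_add₀ hne, hs]
      congr 2
      ring
    rw [hKEY, ← mul_assoc, hsign, hPhiRot, hPhiw]
    constructor
    · intro H
      have hAsR : A = s * R := by linear_combination H
      calc R = (s * s) * R := by rw [hss, one_mul]
        _ = s * A := by rw [hAsR]; ring
    · intro H
      have : A = s * R := by
        calc A = (s * s) * A := by rw [hss, one_mul]
          _ = s * R := by rw [H]; ring
      linear_combination this
  constructor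
  · intro H w hw
    match w with
    | h :: tl =>
      have := H (h :: tl) (by simp)
      simp only [List.headD_cons, List.tail_cons] at this ⊢
      unfold CycCond at *
      exact (main h tl).mp this
  · intro H w hw
    match w with
    | h :: tl =>
      have := H (h :: tl) (by simp)
      simp only [List.headD_cons, List.tail_cons] at this ⊢
      exact (main h tl).mpr this
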